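/- Let d, d_x, d_y ∈ ℕ, let Θ ⊂ ℝ^d be a nonempty compact set, and let A : Θ → ℝ^{d_y×d_x}, B : Θ → ℝ^{d_y×d_y}, C : Θ → ℝ^{d_x×d_x} and D : Θ → ℝ^{d_x×d_x} be continuous mappings such that, for every θ ∈ Θ, the matrices B(θ) and D(θ) are symmetric positive definite and A(θ)ᵀA(θ) is positive definite (i.e. A(θ) has full column rank). Then there exist constants κ₁, κ₂ ∈ (0, ∞) such that for all θ ∈ Θ, x, x' ∈ ℝ^{d_x} and y ∈ ℝ^{d_y}: φ_{d_y}(y; A(θ)x', B(θ)) · φ_{d_x}(x; C(θ)x', D(θ)) ≤ κ₁ · e^{κ₁‖y‖²} · exp( −(‖x‖ − κ₂‖y‖)² / κ₁ ). -/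

import Mathlib

open Matrix

/-- The Euclidean norm on `ℝ^n`. -/
noncomputable def euclNorm {n : ℕ} (x : Fin n → ℝ) : ℝ := Real.sqrt (∑ i, (x i) ^ 2)

/-- The density of the `n`-dimensional Gaussian distribution with mean `m` and
(symmetric positive definite) covariance matrix `V`, with respect to Lebesgue measure. -/
noncomputable def gaussDensity {n : ℕ} (m : Fin n → ℝ) (V : Matrix (Fin n) (Fin n) ℝ)
    (x : Fin n → ℝ) : ℝ :=
  ((2 * Real.pi) ^ n * V.det) ^ (-(1 : ℝ) / 2) *
    Real.exp (-((x - m) ⬝ᵥ (V⁻¹ *ᵥ (x - m))) / 2)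



lemma sumsq_nonneg {n : ℕ} (v : Fin n → ℝ) : 0 ≤ ∑ i, v i ^ 2 :=
  Finset.sum_nonneg fun i _ => sq_nonneg _

lemma euclNorm_nonneg {n : ℕ} (v : Fin n → ℝ) : 0 ≤ euclNorm v := Real.sqrt_nonneg _

lemma euclNorm_sq {n : ℕ} (v : Fin n → ℝ) : euclNorm v ^ 2 = ∑ i, v i ^ 2 :=
  Real.sq_sqrt (sumsq_nonneg v)

lemma euclNorm_eq {n : ℕ} (v : Fin n → ℝ) :
    euclNorm v = ‖(WithLp.equiv 2 (Fin n → ℝ)).symm v‖ := by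
  rw [EuclideanSpace.norm_eq]
  simp [euclNorm, Real.norm_eq_abs, sq_abs]

lemma euclNorm_tri {n : ℕ} (w v : Fin n → ℝ) :
    euclNorm w ≤ euclNorm (w - v) + euclNorm v := by
  rw [euclNorm_eq, euclNorm_eq, euclNorm_eq]
  have h : (WithLp.equiv 2 (Fin n → ℝ)).symm w =
      (WithLp.equiv 2 (Fin n → ℝ)).symm (w - v) + (WithLp.equiv 2 (Fin n → ℝ)).symm v := by
    simp
  rw [h]
  exact norm_add_le _ _

lemma euclNorm_sub_rev {n : ℕ} (w v : Fin n → ℝ) : euclNorm (w - v) = euclNorm (v - w) := by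
  unfold euclNorm
  congr 1
  exact Finset.sum_congr rfl fun i _ => by simp only [Pi.sub_apply]; ring

lemma sumsq_pos {n : ℕ} {v : Fin n → ℝ} (hv : v ≠ 0) : 0 < ∑ i, v i ^ 2 := by
  obtain ⟨i, hi⟩ := Function.ne_iff.mp hv
  refine Finset.sum_pos' (fun j _ => sq_nonneg _) ⟨i, Finset.mem_univ i, ?_⟩
  exact sq_pos_of_ne_zero hi

lemma quadform_scale {n : ℕ} (W : Matrix (Fin n) (Fin n) ℝ) (c : ℝ) (v : Fin n → ℝ) :
    (c • v) ⬝ᵥ (W *ᵥ (c • v)) = c ^ 2 * (v ⬝ᵥ (W *ᵥ v)) := by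
  rw [Matrix.mulVec_smul, smul_dotProduct, dotProduct_smul]
  simp [smul_eq_mul]; ring

lemma sumsq_scale {n : ℕ} (c : ℝ) (v : Fin n → ℝ) :
    (∑ i, (c • v) i ^ 2) = c ^ 2 * ∑ i, v i ^ 2 := by
  rw [Finset.mul_sum]
  exact Finset.sum_congr rfl fun i _ => by simp [smul_eq_mul]; ring

lemma qcont {d n : ℕ} {K : Set (Fin d → ℝ)} {S : Set (Fin n → ℝ)}
    {W : (Fin d → ℝ) → Matrix (Fin n) (Fin n) ℝ}
    (hW : ∀ i j, ContinuousOn (fun θ => W θ i j) K) :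
    ContinuousOn (fun p : (Fin d → ℝ) × (Fin n → ℝ) => p.2 ⬝ᵥ (W p.1 *ᵥ p.2)) (K ×ˢ S) := by
  have hfst : Set.MapsTo (Prod.fst : _ × (Fin n → ℝ) → _) (K ×ˢ S) K := fun p hp => hp.1
  have hexp : ∀ (θ : Fin d → ℝ) (v : Fin n → ℝ),
      v ⬝ᵥ (W θ *ᵥ v) = ∑ i, ∑ j, v i * (W θ i j * v j) := by
    intro θ v
    simp [dotProduct, Matrix.mulVec, Finset.mul_sum]
  simp only [hexp]
  apply continuousOn_finset_sum
  intro i _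
  apply continuousOn_finset_sum
  intro j _
  exact (((continuous_apply i).comp continuous_snd).continuousOn).mul
    (((hW i j).comp continuous_fst.continuousOn hfst).mul
      (((continuous_apply j).comp continuous_snd).continuousOn))

lemma quadform_lb {d n : ℕ} {K : Set (Fin d → ℝ)} (hK : IsCompact K) (hne : K.Nonempty)
    {W : (Fin d → ℝ) → Matrix (Fin n) (Fin n) ℝ}
    (hW : ∀ i j, ContinuousOn (fun θ => W θ i j) K)
    (hpos : ∀ θ ∈ K, ∀ v : Fin n → ℝ, v ≠ 0 → 0 < v ⬝ᵥ (W θ *ᵥ v)) :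
    ∃ β : ℝ, 0 < β ∧ ∀ θ ∈ K, ∀ v : Fin n → ℝ, β * (∑ i, v i ^ 2) ≤ v ⬝ᵥ (W θ *ᵥ v) := by
  rcases Nat.eq_zero_or_pos n with hn | hn
  · subst hn
    refine ⟨1, one_pos, fun θ _ v => ?_⟩
    simp [dotProduct]
  · haveI : Nonempty (Fin n) := Fin.pos_iff_nonempty.mp hn
    set S := Metric.sphere (0 : Fin n → ℝ) 1 with hS
    have hSne : S.Nonempty := NormedSpace.sphere_nonempty.mpr zero_le_one
    have hSc : IsCompact S := isCompact_sphere _ _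
    obtain ⟨p₀, hp₀, hmin⟩ := (hK.prod hSc).exists_isMinOn (hne.prod hSne) (qcont hW)
    have hp₀2 : p₀.2 ≠ 0 := by
      have := hp₀.2
      rw [hS, mem_sphere_zero_iff_norm] at this
      exact norm_ne_zero_iff.mp (this ▸ one_ne_zero)
    have hβ₀ : 0 < p₀.2 ⬝ᵥ (W p₀.1 *ᵥ p₀.2) := hpos p₀.1 hp₀.1 p₀.2 hp₀2
    obtain ⟨u₁, hu₁S, hmax⟩ := hSc.exists_isMaxOn hSne
      (continuous_finset_sum _ fun i _ => (continuous_apply i).pow 2).continuousOn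
    have hu₁ : u₁ ≠ 0 := by
      rw [hS, mem_sphere_zero_iff_norm] at hu₁S
      exact norm_ne_zero_iff.mp (hu₁S ▸ one_ne_zero)
    set β₀ := p₀.2 ⬝ᵥ (W p₀.1 *ᵥ p₀.2)
    set M₀ := ∑ i, u₁ i ^ 2 with hM₀def
    have hM₀ : 0 < M₀ := sumsq_pos hu₁
    refine ⟨β₀ / M₀, div_pos hβ₀ hM₀, fun θ hθ v => ?_⟩
    rcases eq_or_ne v 0 with rfl | hv
    · simp [dotProduct]
    · have hc : (0 : ℝ) < ‖v‖ := norm_pos_iff.mpr hv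
      set c := ‖v‖
      set w : Fin n → ℝ := c⁻¹ • v with hwdef
      have hwS : w ∈ S := by
        rw [hS, mem_sphere_zero_iff_norm]
        exact norm_smul_inv_norm hv
      have h1 : β₀ ≤ w ⬝ᵥ (W θ *ᵥ w) := hmin (Set.mk_mem_prod hθ hwS)
      have h2 : (∑ i, w i ^ 2) ≤ M₀ := hmax hwS
      have h3 : (β₀ / M₀) * (∑ i, w i ^ 2) ≤ w ⬝ᵥ (W θ *ᵥ w) := by
        calc (β₀ / M₀) * (∑ i, w i ^ 2) ≤ (β₀ / M₀) * M₀ :=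
              mul_le_mul_of_nonneg_left h2 (div_pos hβ₀ hM₀).le
          _ = β₀ := div_mul_cancel₀ _ hM₀.ne'
          _ ≤ _ := h1
    -- now scale back
      have hq : w ⬝ᵥ (W θ *ᵥ w) = (c⁻¹) ^ 2 * (v ⬝ᵥ (W θ *ᵥ v)) := quadform_scale _ _ _
      have hsq : (∑ i, w i ^ 2) = (c⁻¹) ^ 2 * ∑ i, v i ^ 2 := sumsq_scale _ _
      rw [hq, hsq] at h3
      have hcc : c ^ 2 * (c⁻¹) ^ 2 = 1 := by field_simp
      calc (β₀ / M₀) * (∑ i, v i ^ 2)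
          = c ^ 2 * ((β₀ / M₀) * ((c⁻¹) ^ 2 * ∑ i, v i ^ 2)) := by
            rw [← one_mul ((β₀ / M₀) * (∑ i, v i ^ 2)), ← hcc]; ring
        _ ≤ c ^ 2 * ((c⁻¹) ^ 2 * (v ⬝ᵥ (W θ *ᵥ v))) :=
            mul_le_mul_of_nonneg_left h3 (sq_nonneg c)
        _ = v ⬝ᵥ (W θ *ᵥ v) := by rw [← mul_assoc, hcc, one_mul]

lemma quadform_ub {d n : ℕ} {K : Set (Fin d → ℝ)} (hK : IsCompact K) (hne : K.Nonempty)
    {W : (Fin d → ℝ) → Matrix (Fin n) (Fin n) ℝ}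
    (hW : ∀ i j, ContinuousOn (fun θ => W θ i j) K) :
    ∃ M : ℝ, 0 < M ∧ ∀ θ ∈ K, ∀ v : Fin n → ℝ, v ⬝ᵥ (W θ *ᵥ v) ≤ M * (∑ i, v i ^ 2) := by
  rcases Nat.eq_zero_or_pos n with hn | hn
  · subst hn
    refine ⟨1, one_pos, fun θ _ v => ?_⟩
    simp [dotProduct]
  · haveI : Nonempty (Fin n) := Fin.pos_iff_nonempty.mp hn
    set S := Metric.sphere (0 : Fin n → ℝ) 1 with hS
    have hSne : S.Nonempty := NormedSpace.sphere_nonempty.mpr zero_le_one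
    have hSc : IsCompact S := isCompact_sphere _ _
    obtain ⟨p₁, hp₁, hmax⟩ := (hK.prod hSc).exists_isMaxOn (hne.prod hSne) (qcont hW)
    obtain ⟨u₂, hu₂S, hminS⟩ := hSc.exists_isMinOn hSne
      (continuous_finset_sum _ fun i _ => (continuous_apply i).pow 2).continuousOn
    have hu₂ : u₂ ≠ 0 := by
      rw [hS, mem_sphere_zero_iff_norm] at hu₂S
      exact norm_ne_zero_iff.mp (hu₂S ▸ one_ne_zero)
    set M₁ := p₁.2 ⬝ᵥ (W p₁.1 *ᵥ p₁.2)
    set m₀ := ∑ i, u₂ i ^ 2 with hm₀def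
    have hm₀ : 0 < m₀ := sumsq_pos hu₂
    set M := max M₁ 0 / m₀ + 1 with hMdef
    have hMpos : 0 < M := by positivity
    refine ⟨M, hMpos, fun θ hθ v => ?_⟩
    rcases eq_or_ne v 0 with rfl | hv
    · simp [dotProduct]
    · have hc : (0 : ℝ) < ‖v‖ := norm_pos_iff.mpr hv
      set c := ‖v‖
      set w : Fin n → ℝ := c⁻¹ • v with hwdef
      have hwS : w ∈ S := by
        rw [hS, mem_sphere_zero_iff_norm]
        exact norm_smul_inv_norm hv
      have h1 : w ⬝ᵥ (W θ *ᵥ w) ≤ M₁ := hmax (Set.mk_mem_prod hθ hwS)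
      have h2 : m₀ ≤ (∑ i, w i ^ 2) := hminS hwS
      have hwpos : 0 < ∑ i, w i ^ 2 := sumsq_pos (by
        intro h; rw [hS, mem_sphere_zero_iff_norm, h] at hwS; simp at hwS)
      have h3 : w ⬝ᵥ (W θ *ᵥ w) ≤ M * (∑ i, w i ^ 2) := by
        calc w ⬝ᵥ (W θ *ᵥ w) ≤ M₁ := h1
          _ ≤ max M₁ 0 := le_max_left _ _
          _ = (max M₁ 0 / m₀) * m₀ := (div_mul_cancel₀ _ hm₀.ne').symm
          _ ≤ (max M₁ 0 / m₀) * (∑ i, w i ^ 2) :=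
              mul_le_mul_of_nonneg_left h2 (by positivity)
          _ ≤ M * (∑ i, w i ^ 2) := by
              apply mul_le_mul_of_nonneg_right _ hwpos.le
              rw [hMdef]; linarith
      have hq : w ⬝ᵥ (W θ *ᵥ w) = (c⁻¹) ^ 2 * (v ⬝ᵥ (W θ *ᵥ v)) := quadform_scale _ _ _
      have hsq : (∑ i, w i ^ 2) = (c⁻¹) ^ 2 * ∑ i, v i ^ 2 := sumsq_scale _ _
      rw [hq, hsq] at h3
      have hcc : c ^ 2 * (c⁻¹) ^ 2 = 1 := by field_simp
      calc v ⬝ᵥ (W θ *ᵥ v)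
          = c ^ 2 * ((c⁻¹) ^ 2 * (v ⬝ᵥ (W θ *ᵥ v))) := by rw [← mul_assoc, hcc, one_mul]
        _ ≤ c ^ 2 * (M * ((c⁻¹) ^ 2 * ∑ i, v i ^ 2)) :=
            mul_le_mul_of_nonneg_left h3 (sq_nonneg c)
        _ = M * (∑ i, v i ^ 2) := by
            rw [← one_mul (M * (∑ i, v i ^ 2)), ← hcc]; ring

lemma dot_tmul {p q : ℕ} (M : Matrix (Fin p) (Fin q) ℝ) (v : Fin q → ℝ) :
    v ⬝ᵥ ((Mᵀ * M) *ᵥ v) = ∑ i, ((M *ᵥ v) i) ^ 2 := by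
  rw [← Matrix.mulVec_mulVec, Matrix.dotProduct_mulVec, Matrix.vecMul_transpose]
  simp [dotProduct, sq]


lemma gaussDensity_le {n : ℕ} {m : Fin n → ℝ} {V : Matrix (Fin n) (Fin n) ℝ} {z : Fin n → ℝ}
    {β δ : ℝ} (hδ : 0 < δ) (hdet : δ ≤ V.det)
    (hβ : β * (∑ i, (z - m) i ^ 2) ≤ (z - m) ⬝ᵥ (V⁻¹ *ᵥ (z - m))) :
    gaussDensity m V z ≤
      ((2 * Real.pi) ^ n * δ) ^ (-(1 : ℝ) / 2) * Real.exp (-(β * euclNorm (z - m) ^ 2) / 2) := by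
  have h2π : (0 : ℝ) < (2 * Real.pi) ^ n := by positivity
  have hbase : (0 : ℝ) < (2 * Real.pi) ^ n * δ := by positivity
  have hpre : ((2 * Real.pi) ^ n * V.det) ^ (-(1 : ℝ) / 2) ≤
      ((2 * Real.pi) ^ n * δ) ^ (-(1 : ℝ) / 2) := by
    apply Real.rpow_le_rpow_of_nonpos hbase
      (mul_le_mul_of_nonneg_left hdet h2π.le) (by norm_num)
  have hexp : Real.exp (-((z - m) ⬝ᵥ (V⁻¹ *ᵥ (z - m))) / 2) ≤
      Real.exp (-(β * euclNorm (z - m) ^ 2) / 2) := by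
    apply Real.exp_le_exp.mpr
    rw [euclNorm_sq]
    linarith
  exact mul_le_mul hpre hexp (Real.exp_pos _).le (Real.rpow_nonneg hbase.le _)

lemma gaussDensity_nonneg {n : ℕ} {m : Fin n → ℝ} {V : Matrix (Fin n) (Fin n) ℝ}
    (hdet : 0 < V.det) (z : Fin n → ℝ) : 0 ≤ gaussDensity m V z := by
  have : (0:ℝ) < (2 * Real.pi) ^ n * V.det := by positivity
  exact mul_nonneg (Real.rpow_nonneg this.le _) (Real.exp_pos _).le

lemma inv_entries_cont {d n : ℕ} {K : Set (Fin d → ℝ)}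
    {B : (Fin d → ℝ) → Matrix (Fin n) (Fin n) ℝ}
    (hB : ∀ i j, ContinuousOn (fun θ => B θ i j) K)
    (hdet : ∀ θ ∈ K, (B θ).det ≠ 0) :
    ∀ i j, ContinuousOn (fun θ => (B θ)⁻¹ i j) K := by
  have hBmat : ContinuousOn (fun θ => B θ) K :=
    continuousOn_pi.mpr fun i => continuousOn_pi.mpr fun j => hB i j
  have hdetc : ContinuousOn (fun θ => (B θ).det) K :=
    (continuous_id.matrix_det).comp_continuousOn hBmat
  have hadj : ContinuousOn (fun θ => (B θ).adjugate) K :=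
    (continuous_id.matrix_adjugate).comp_continuousOn hBmat
  intro i j
  have hadjij : ContinuousOn (fun θ => (B θ).adjugate i j) K := by
    have := ((continuous_apply j).comp (continuous_apply i)).comp_continuousOn hadj
    exact this
  have h1 : ContinuousOn (fun θ => ((B θ).det)⁻¹ * (B θ).adjugate i j) K :=
    (hdetc.inv₀ hdet).mul hadjij
  apply h1.congr
  intro θ hθ
  show (B θ)⁻¹ i j = _
  rw [Matrix.inv_def, Ring.inverse_eq_inv']
  simp [Matrix.smul_apply, smul_eq_mul]

lemma key_ineq {nx ny t u κ₁ κ₂ βB βD : ℝ}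
    (hnx0 : 0 ≤ nx) (hny0 : 0 ≤ ny) (ht0 : 0 ≤ t) (hu0 : 0 ≤ u)
    (hβB : 0 < βB) (hβD : 0 < βD) (hκ₂ : 0 < κ₂) (hκκ₂ : κ₂ ≤ κ₁)
    (hk1 : 4 ≤ κ₁ * βD) (hk2 : 4 * κ₂ ^ 2 ≤ κ₁ * βB)
    (hs : nx ≤ u + κ₂ * t + κ₂ * ny) :
    (nx - κ₂ * ny) ^ 2 ≤ κ₁ * ((βB * t ^ 2 + βD * u ^ 2) / 2) + κ₁ ^ 2 * ny ^ 2 := by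
  have hκ₁ : 0 < κ₁ := lt_of_lt_of_le hκ₂ hκκ₂
  rcases le_or_gt nx (κ₂ * ny) with hcase | hcase
  · have hE : 0 ≤ κ₁ * ((βB * t ^ 2 + βD * u ^ 2) / 2) := by positivity
    nlinarith [mul_nonneg hnx0 (by linarith : 0 ≤ 2 * (κ₂ * ny) - nx),
      mul_nonneg (mul_nonneg (sub_nonneg.mpr hκκ₂) (by linarith : 0 ≤ κ₁ + κ₂)) (sq_nonneg ny)]
  · have hs0 : 0 ≤ nx - κ₂ * ny := by linarith
    have h1 : (nx - κ₂ * ny) ^ 2 ≤ (u + κ₂ * t) ^ 2 :=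
      pow_le_pow_left₀ hs0 (by linarith) 2
    nlinarith [sq_nonneg (u - κ₂ * t),
      mul_nonneg (by linarith : (0:ℝ) ≤ κ₁ * βD - 4) (sq_nonneg u),
      mul_nonneg (by linarith : (0:ℝ) ≤ κ₁ * βB - 4 * κ₂ ^ 2) (sq_nonneg t),
      sq_nonneg (κ₁ * ny)]

set_option maxHeartbeats 1000000 in
theorem stmt12 (d dx dy : ℕ) (Θ : Set (Fin d → ℝ)) (hne : Θ.Nonempty) (hcp : IsCompact Θ)
    (A : (Fin d → ℝ) → Matrix (Fin dy) (Fin dx) ℝ)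
    (B : (Fin d → ℝ) → Matrix (Fin dy) (Fin dy) ℝ)
    (C : (Fin d → ℝ) → Matrix (Fin dx) (Fin dx) ℝ)
    (Dm : (Fin d → ℝ) → Matrix (Fin dx) (Fin dx) ℝ)
    (hA : ∀ i j, ContinuousOn (fun θ => A θ i j) Θ)
    (hB : ∀ i j, ContinuousOn (fun θ => B θ i j) Θ)
    (hC : ∀ i j, ContinuousOn (fun θ => C θ i j) Θ)
    (hD : ∀ i j, ContinuousOn (fun θ => Dm θ i j) Θ)
    (hBpd : ∀ θ ∈ Θ, (B θ).PosDef) (hDpd : ∀ θ ∈ Θ, (Dm θ).PosDef)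
    (hApd : ∀ θ ∈ Θ, ((A θ)ᵀ * A θ).PosDef) :
    ∃ κ₁ : ℝ, 0 < κ₁ ∧ ∃ κ₂ : ℝ, 0 < κ₂ ∧
      ∀ θ ∈ Θ, ∀ (x x' : Fin dx → ℝ) (y : Fin dy → ℝ),
        gaussDensity (A θ *ᵥ x') (B θ) y * gaussDensity (C θ *ᵥ x') (Dm θ) x ≤
          κ₁ * Real.exp (κ₁ * euclNorm y ^ 2) *
            Real.exp (-(euclNorm x - κ₂ * euclNorm y) ^ 2 / κ₁) := by
  -- determinant lower bounds
  have hdetBpos : ∀ θ ∈ Θ, 0 < (B θ).det := fun θ hθ => (hBpd θ hθ).det_pos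
  have hdetDpos : ∀ θ ∈ Θ, 0 < (Dm θ).det := fun θ hθ => (hDpd θ hθ).det_pos
  have hBmat : ContinuousOn (fun θ => B θ) Θ :=
    continuousOn_pi.mpr fun i => continuousOn_pi.mpr fun j => hB i j
  have hDmat : ContinuousOn (fun θ => Dm θ) Θ :=
    continuousOn_pi.mpr fun i => continuousOn_pi.mpr fun j => hD i j
  obtain ⟨θB, hθB, hminB⟩ :=
    hcp.exists_isMinOn hne (continuous_id.matrix_det.comp_continuousOn hBmat)
  obtain ⟨θD, hθD, hminD⟩ :=
    hcp.exists_isMinOn hne (continuous_id.matrix_det.comp_continuousOn hDmat)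
  set δB := (B θB).det with hδBdef
  set δD := (Dm θD).det with hδDdef
  have hδB : 0 < δB := hdetBpos θB hθB
  have hδD : 0 < δD := hdetDpos θD hθD
  have hminB' : ∀ θ' ∈ Θ, δB ≤ (B θ').det := fun θ' hθ' => hminB hθ'
  have hminD' : ∀ θ' ∈ Θ, δD ≤ (Dm θ').det := fun θ' hθ' => hminD hθ'
  -- quadratic form lower bounds for the inverses
  obtain ⟨βB, hβB, hlbB⟩ := quadform_lb hcp hne
    (inv_entries_cont hB (fun θ hθ => (hdetBpos θ hθ).ne'))
    (fun θ hθ v hv => by simpa using ((hBpd θ hθ).inv).dotProduct_mulVec_pos hv)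
  obtain ⟨βD, hβD, hlbD⟩ := quadform_lb hcp hne
    (inv_entries_cont hD (fun θ hθ => (hdetDpos θ hθ).ne'))
    (fun θ hθ v hv => by simpa using ((hDpd θ hθ).inv).dotProduct_mulVec_pos hv)
  -- lower bound for AᵀA, upper bound for CᵀC
  have hAtA : ∀ i j, ContinuousOn (fun θ => ((A θ)ᵀ * A θ) i j) Θ := by
    intro i j
    simp only [Matrix.mul_apply, Matrix.transpose_apply]
    exact continuousOn_finset_sum _ fun k _ => (hA k i).mul (hA k j)
  have hCtC : ∀ i j, ContinuousOn (fun θ => ((C θ)ᵀ * C θ) i j) Θ := by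
    intro i j
    simp only [Matrix.mul_apply, Matrix.transpose_apply]
    exact continuousOn_finset_sum _ fun k _ => (hC k i).mul (hC k j)
  obtain ⟨a2, ha2, hlbA⟩ := quadform_lb hcp hne hAtA
    (fun θ hθ v hv => by simpa using (hApd θ hθ).dotProduct_mulVec_pos hv)
  obtain ⟨c2, hc2, hubC⟩ := quadform_ub hcp hne hCtC
  -- constants
  set aA := Real.sqrt a2 with haAdef
  have haA : 0 < aA := Real.sqrt_pos.mpr ha2
  set cC := Real.sqrt c2 with hcCdef
  have hcC : 0 < cC := Real.sqrt_pos.mpr hc2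
  set κ₂ := cC / aA with hκ₂def
  have hκ₂ : 0 < κ₂ := div_pos hcC haA
  have hka : κ₂ * aA = cC := by rw [hκ₂def]; exact div_mul_cancel₀ _ haA.ne'
  set NB := ((2 * Real.pi) ^ dy * δB) ^ (-(1 : ℝ) / 2) with hNBdef
  set ND := ((2 * Real.pi) ^ dx * δD) ^ (-(1 : ℝ) / 2) with hNDdef
  have hNB : 0 < NB := Real.rpow_pos_of_pos (by positivity) _
  have hND : 0 < ND := Real.rpow_pos_of_pos (by positivity) _
  set κ₁ := NB * ND + 4 / βD + 4 * κ₂ ^ 2 / βB + κ₂ + 1 with hκ₁def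
  have h4D : (0:ℝ) ≤ 4 / βD := by positivity
  have h4B : (0:ℝ) ≤ 4 * κ₂ ^ 2 / βB := by positivity
  have hNBND' : (0:ℝ) < NB * ND := mul_pos hNB hND
  have hκ₁ : 0 < κ₁ := by rw [hκ₁def]; linarith
  have hNBND : NB * ND ≤ κ₁ := by rw [hκ₁def]; linarith
  have hκκ₂ : κ₂ ≤ κ₁ := by rw [hκ₁def]; linarith
  have hk1 : 4 ≤ κ₁ * βD := by
    have h := mul_le_mul_of_nonneg_right
      (show 4 / βD ≤ κ₁ by rw [hκ₁def]; linarith) hβD.le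
    rwa [div_mul_cancel₀ _ hβD.ne'] at h
  have hk2 : 4 * κ₂ ^ 2 ≤ κ₁ * βB := by
    have h := mul_le_mul_of_nonneg_right
      (show 4 * κ₂ ^ 2 / βB ≤ κ₁ by rw [hκ₁def]; linarith) hβB.le
    rwa [div_mul_cancel₀ _ hβB.ne'] at h
  clear_value δB δD κ₁
  refine ⟨κ₁, hκ₁, κ₂, hκ₂, fun θ hθ x x' y => ?_⟩
  -- gaussian density bounds
  have hg1 : gaussDensity (A θ *ᵥ x') (B θ) y ≤
      NB * Real.exp (-(βB * euclNorm (y - A θ *ᵥ x') ^ 2) / 2) := by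
    rw [hNBdef]
    exact gaussDensity_le hδB (hminB' θ hθ) (hlbB θ hθ (y - A θ *ᵥ x'))
  have hg2 : gaussDensity (C θ *ᵥ x') (Dm θ) x ≤
      ND * Real.exp (-(βD * euclNorm (x - C θ *ᵥ x') ^ 2) / 2) := by
    rw [hNDdef]
    exact gaussDensity_le hδD (hminD' θ hθ) (hlbD θ hθ (x - C θ *ᵥ x'))
  -- geometry
  have hAx : a2 * (∑ i, x' i ^ 2) ≤ ∑ i, ((A θ *ᵥ x') i) ^ 2 := by
    have h := hlbA θ hθ x'; rwa [dot_tmul] at h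
  have h6 : aA * euclNorm x' ≤ euclNorm (A θ *ᵥ x') := by
    calc aA * euclNorm x' = Real.sqrt a2 * Real.sqrt (∑ i, x' i ^ 2) := by
          rw [haAdef]; rfl
      _ = Real.sqrt (a2 * ∑ i, x' i ^ 2) := (Real.sqrt_mul ha2.le _).symm
      _ ≤ Real.sqrt (∑ i, ((A θ *ᵥ x') i) ^ 2) := Real.sqrt_le_sqrt hAx
      _ = euclNorm (A θ *ᵥ x') := rfl
  have h7 : euclNorm (A θ *ᵥ x') ≤ euclNorm (y - A θ *ᵥ x') + euclNorm y := by
    have h := euclNorm_tri (A θ *ᵥ x') y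
    rwa [euclNorm_sub_rev] at h
  have hCx : euclNorm (C θ *ᵥ x') ≤ cC * euclNorm x' := by
    have hC2 : ∑ i, ((C θ *ᵥ x') i) ^ 2 ≤ c2 * ∑ i, x' i ^ 2 := by
      have h := hubC θ hθ x'; rwa [dot_tmul] at h
    calc euclNorm (C θ *ᵥ x') = Real.sqrt (∑ i, ((C θ *ᵥ x') i) ^ 2) := rfl
      _ ≤ Real.sqrt (c2 * ∑ i, x' i ^ 2) := Real.sqrt_le_sqrt hC2
      _ = Real.sqrt c2 * Real.sqrt (∑ i, x' i ^ 2) := Real.sqrt_mul hc2.le _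
      _ = cC * euclNorm x' := by rw [hcCdef]; rfl
  have h8 : euclNorm x ≤ euclNorm (x - C θ *ᵥ x') + euclNorm (C θ *ᵥ x') :=
    euclNorm_tri x (C θ *ᵥ x')
  have h9 : cC * euclNorm x' ≤ κ₂ * (euclNorm (y - A θ *ᵥ x') + euclNorm y) := by
    calc cC * euclNorm x' = κ₂ * (aA * euclNorm x') := by rw [← hka]; ring
      _ ≤ κ₂ * (euclNorm (y - A θ *ᵥ x') + euclNorm y) :=
          mul_le_mul_of_nonneg_left (h6.trans h7) hκ₂.le
  clear_value aA cC κ₂ NB ND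
  set t := euclNorm (y - A θ *ᵥ x') with htdef
  set u := euclNorm (x - C θ *ᵥ x') with hudef
  set nx := euclNorm x with hnxdef
  set ny := euclNorm y with hnydef
  have ht0 : 0 ≤ t := euclNorm_nonneg _
  have hu0 : 0 ≤ u := euclNorm_nonneg _
  have hnx0 : 0 ≤ nx := euclNorm_nonneg _
  have hny0 : 0 ≤ ny := euclNorm_nonneg _
  clear_value t u nx ny
  have hprod : gaussDensity (A θ *ᵥ x') (B θ) y * gaussDensity (C θ *ᵥ x') (Dm θ) x ≤
      NB * ND * Real.exp (-((βB * t ^ 2 + βD * u ^ 2) / 2)) := by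
    have he : Real.exp (-(βB * t ^ 2) / 2) * Real.exp (-(βD * u ^ 2) / 2) =
        Real.exp (-((βB * t ^ 2 + βD * u ^ 2) / 2)) := by
      rw [← Real.exp_add]; congr 1; ring
    calc gaussDensity (A θ *ᵥ x') (B θ) y * gaussDensity (C θ *ᵥ x') (Dm θ) x
        ≤ (NB * Real.exp (-(βB * t ^ 2) / 2)) * (ND * Real.exp (-(βD * u ^ 2) / 2)) :=
          mul_le_mul hg1 hg2 (gaussDensity_nonneg (hdetDpos θ hθ) x)
            (mul_nonneg hNB.le (Real.exp_pos _).le)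
      _ = NB * ND * (Real.exp (-(βB * t ^ 2) / 2) * Real.exp (-(βD * u ^ 2) / 2)) := by ring
      _ = NB * ND * Real.exp (-((βB * t ^ 2 + βD * u ^ 2) / 2)) := by rw [he]
  have hs : nx ≤ u + κ₂ * t + κ₂ * ny := by
    have h9' : κ₂ * (t + ny) = κ₂ * t + κ₂ * ny := by ring
    linarith [h8, hCx, h9, h9'.le]
  -- the key scalar inequality
  have claim : (nx - κ₂ * ny) ^ 2 ≤ κ₁ * ((βB * t ^ 2 + βD * u ^ 2) / 2) + κ₁ ^ 2 * ny ^ 2 :=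
    key_ineq hnx0 hny0 ht0 hu0 hβB hβD hκ₂ hκκ₂ hk1 hk2 hs
  -- finish
  have hEdef : -((βB * t ^ 2 + βD * u ^ 2) / 2) - κ₁ * ny ^ 2 ≤ -(nx - κ₂ * ny) ^ 2 / κ₁ := by
    have h2 : (nx - κ₂ * ny) ^ 2 / κ₁ ≤ (βB * t ^ 2 + βD * u ^ 2) / 2 + κ₁ * ny ^ 2 := by
      rw [div_le_iff₀ hκ₁]; linarith [claim, (by ring : ((βB * t ^ 2 + βD * u ^ 2) / 2 + κ₁ * ny ^ 2) * κ₁ = κ₁ * ((βB * t ^ 2 + βD * u ^ 2) / 2) + κ₁ ^ 2 * ny ^ 2)]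
    have h3 : -(nx - κ₂ * ny) ^ 2 / κ₁ = -((nx - κ₂ * ny) ^ 2 / κ₁) := by ring
    rw [h3]; linarith
  have hfinal : NB * ND * Real.exp (-((βB * t ^ 2 + βD * u ^ 2) / 2)) ≤
      κ₁ * Real.exp (κ₁ * ny ^ 2) * Real.exp (-(nx - κ₂ * ny) ^ 2 / κ₁) := by
    calc NB * ND * Real.exp (-((βB * t ^ 2 + βD * u ^ 2) / 2))
        ≤ κ₁ * Real.exp (-((βB * t ^ 2 + βD * u ^ 2) / 2)) :=
          mul_le_mul_of_nonneg_right hNBND (Real.exp_pos _).le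
      _ = κ₁ * Real.exp (κ₁ * ny ^ 2) *
            Real.exp (-((βB * t ^ 2 + βD * u ^ 2) / 2) - κ₁ * ny ^ 2) := by
          rw [mul_assoc, ← Real.exp_add]; ring_nf
      _ ≤ κ₁ * Real.exp (κ₁ * ny ^ 2) * Real.exp (-(nx - κ₂ * ny) ^ 2 / κ₁) :=
          mul_le_mul_of_nonneg_left (Real.exp_le_exp.mpr hEdef)
            (mul_nonneg hκ₁.le (Real.exp_pos _).le)
  exact hprod.trans hfinal
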